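/- arXiv:2202.04020 — 3 statements merged into one kernel-verified Lean document; each statement's English description precedes it below -/
import Mathlib

section
/- Let X* ∈ F_{n,k} be an optimal solution of min_{X∈F_{n,k}} f(X), and write the eigen-decomposition −∇f(X*) = Σ_{i=1}^n μ_i u_iu_iᵀ with μ₁ ≥ μ₂ ≥ ... ≥ μ_n and {u_i} orthonormal. Let r be the smallest integer with r ≥ k and μ_k − μ_{r+1} > 0. Then for every i with r+1 ≤ i ≤ n, X* is orthogonal to u_iu_iᵀ (i.e., ⟨X*, u_iu_iᵀ⟩ = u_iᵀX*u_i = 0), and rank(X*) ≤ r. In particular, if r = k, then X* = Σ_{i=1}^k u_iu_iᵀ is the unique orthogonal projection matrix onto the span of the k leading eigenvectors of −∇f(X*), so X* ∈ P_{n,k}. -/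
open Matrix

noncomputable def frobNorm {m : ℕ} (A : Matrix (Fin m) (Fin m) ℝ) : ℝ :=
  Real.sqrt (∑ i, ∑ j, (A i j) ^ 2)

/-- `eigval A j` is the `j`-th largest eigenvalue (1-indexed) of the symmetric matrix `A`. -/
noncomputable def eigval {m : ℕ} (A : Matrix (Fin m) (Fin m) ℝ) (j : ℕ) : ℝ :=
  if h : A.IsHermitian then
    if hj : m - j < m then (h.eigenvalues ∘ Tuple.sort h.eigenvalues) ⟨m - j, hj⟩ else 0
  else 0

/-- spectral norm: largest singular value. -/
noncomputable def specNorm {m : ℕ} (A : Matrix (Fin m) (Fin m) ℝ) : ℝ :=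
  Real.sqrt (eigval (Aᵀ * A) 1)

/-- `P_{n,k}`: rank-`k` orthogonal projection matrices. -/
def ProjSet (n k : ℕ) : Set (Matrix (Fin n) (Fin n) ℝ) :=
  {X | ∃ Q : Matrix (Fin n) (Fin k) ℝ, Qᵀ * Q = 1 ∧ X = Q * Qᵀ}

/-- The Fantope `F_{n,k}`. -/
def Fantope (n k : ℕ) : Set (Matrix (Fin n) (Fin n) ℝ) :=
  {X | X.IsSymm ∧ X.PosSemidef ∧ (1 - X).PosSemidef ∧ X.trace = (k : ℝ)}

lemma frobNorm_nonneg {m : ℕ} (A : Matrix (Fin m) (Fin m) ℝ) : 0 ≤ frobNorm A :=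
  Real.sqrt_nonneg _

lemma frobNorm_smul {m : ℕ} (t : ℝ) (ht : 0 ≤ t) (A : Matrix (Fin m) (Fin m) ℝ) :
    frobNorm (t • A) = t * frobNorm A := by
  unfold frobNorm
  have h : ∑ i, ∑ j, ((t • A) i j) ^ 2 = t ^ 2 * ∑ i, ∑ j, (A i j) ^ 2 := by
    rw [Finset.mul_sum]
    refine Finset.sum_congr rfl fun i _ => ?_
    rw [Finset.mul_sum]
    refine Finset.sum_congr rfl fun j _ => ?_
    simp [Matrix.smul_apply]
    ring
  rw [h, Real.sqrt_mul (sq_nonneg t), Real.sqrt_sq ht]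

lemma frobNorm_neg {m : ℕ} (A : Matrix (Fin m) (Fin m) ℝ) : frobNorm (-A) = frobNorm A := by
  unfold frobNorm
  congr 1
  refine Finset.sum_congr rfl fun i _ => Finset.sum_congr rfl fun j _ => ?_
  simp [Matrix.neg_apply]

lemma trace_mul_abs_le {m : ℕ} (M D : Matrix (Fin m) (Fin m) ℝ) :
    |(M * D).trace| ≤ frobNorm M * frobNorm D := by
  have htr : (M * D).trace = ∑ p : Fin m × Fin m, M p.1 p.2 * D p.2 p.1 := by
    rw [Fintype.sum_prod_type]
    simp [Matrix.trace, Matrix.diag, Matrix.mul_apply]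
  have hM : frobNorm M = Real.sqrt (∑ p : Fin m × Fin m, (M p.1 p.2) ^ 2) := by
    rw [frobNorm, Fintype.sum_prod_type]
  have hD : frobNorm D = Real.sqrt (∑ p : Fin m × Fin m, (D p.2 p.1) ^ 2) := by
    rw [frobNorm, Fintype.sum_prod_type]
    congr 1
    exact Finset.sum_comm
  rw [htr, hM, hD, ← Real.sqrt_mul (by positivity)]
  rw [show |∑ p : Fin m × Fin m, M p.1 p.2 * D p.2 p.1| =
      Real.sqrt ((∑ p : Fin m × Fin m, M p.1 p.2 * D p.2 p.1) ^ 2) from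
    (Real.sqrt_sq_eq_abs _).symm]
  exact Real.sqrt_le_sqrt (Finset.sum_mul_sq_le_sq_mul_sq _ _ _)

lemma vecMulVec_mulVec' {m : ℕ} (v w x : Fin m → ℝ) :
    vecMulVec v w *ᵥ x = (w ⬝ᵥ x) • v := by
  funext a
  simp only [Matrix.mulVec, dotProduct, vecMulVec_apply, Pi.smul_apply, smul_eq_mul,
    Matrix.of_apply]
  rw [Finset.sum_mul]
  refine Finset.sum_congr rfl fun j _ => by ring

lemma trace_vecMulVec_mul {m : ℕ} (v w : Fin m → ℝ) (X : Matrix (Fin m) (Fin m) ℝ) :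
    (vecMulVec v w * X).trace = w ⬝ᵥ (X *ᵥ v) := by
  simp only [Matrix.trace, Matrix.diag, Matrix.mul_apply, vecMulVec_apply,
    Matrix.mulVec, dotProduct]
  rw [Finset.sum_comm]
  refine Finset.sum_congr rfl fun j _ => ?_
  rw [Finset.mul_sum]
  refine Finset.sum_congr rfl fun i _ => by ring

lemma mul_vecMulVec {m : ℕ} (X : Matrix (Fin m) (Fin m) ℝ) (v w : Fin m → ℝ) :
    X * vecMulVec v w = vecMulVec (X *ᵥ v) w := by
  ext a b
  simp only [Matrix.mul_apply, vecMulVec_apply, Matrix.mulVec, dotProduct]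
  rw [Finset.sum_mul]
  refine Finset.sum_congr rfl fun c _ => by ring

lemma psd_vecMulVec {m : ℕ} (v : Fin m → ℝ) : (vecMulVec v v).PosSemidef := by
  refine Matrix.PosSemidef.of_dotProduct_mulVec_nonneg ?_ ?_
  · rw [Matrix.IsHermitian, conjTranspose_eq_transpose_of_trivial]
    ext a b
    simp [Matrix.transpose_apply, vecMulVec_apply, mul_comm]
  · intro x
    rw [star_trivial, vecMulVec_mulVec', dotProduct_smul]
    have : v ⬝ᵥ x = x ⬝ᵥ v := dotProduct_comm _ _
    simp only [smul_eq_mul]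
    rw [this]
    exact mul_self_nonneg _

lemma sum_mulVec' {m : ℕ} {ι : Type*} (s : Finset ι) (g : ι → Matrix (Fin m) (Fin m) ℝ)
    (x : Fin m → ℝ) : (∑ i ∈ s, g i) *ᵥ x = ∑ i ∈ s, g i *ᵥ x := by
  funext j
  simp only [Matrix.mulVec, dotProduct, Finset.sum_apply, Matrix.sum_apply,
    Finset.sum_mul]
  exact Finset.sum_comm

lemma dotProduct_sum' {m : ℕ} {ι : Type*} (x : Fin m → ℝ) (s : Finset ι) (g : ι → Fin m → ℝ) :
    x ⬝ᵥ (∑ i ∈ s, g i) = ∑ i ∈ s, x ⬝ᵥ g i := by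
  simp only [dotProduct, Finset.sum_apply, Finset.mul_sum]
  exact Finset.sum_comm

lemma psd_sum {m : ℕ} {ι : Type*} (s : Finset ι) (g : ι → Matrix (Fin m) (Fin m) ℝ)
    (h : ∀ i ∈ s, (g i).PosSemidef) : (∑ i ∈ s, g i).PosSemidef := by
  refine Matrix.PosSemidef.of_dotProduct_mulVec_nonneg ?_ ?_
  · rw [Matrix.IsHermitian, conjTranspose_sum]
    exact Finset.sum_congr rfl fun i hi => (h i hi).1
  · intro x
    rw [sum_mulVec', dotProduct_sum']
    exact Finset.sum_nonneg fun i hi => (h i hi).dotProduct_mulVec_nonneg x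

lemma psd_smul {m : ℕ} {t : ℝ} (ht : 0 ≤ t) {A : Matrix (Fin m) (Fin m) ℝ}
    (hA : A.PosSemidef) : (t • A).PosSemidef := by
  refine Matrix.PosSemidef.of_dotProduct_mulVec_nonneg ?_ ?_
  · rw [Matrix.IsHermitian, conjTranspose_smul, hA.1, star_trivial]
  · intro x
    rw [smul_mulVec, dotProduct_smul]
    exact mul_nonneg ht (hA.dotProduct_mulVec_nonneg x)

lemma sum_filter_lt {M : Type*} [AddCommMonoid M] {n r : ℕ} (hrn : r ≤ n) (g : Fin n → M) :
    ∑ i ∈ Finset.univ.filter (fun i : Fin n => (i : ℕ) < r), g i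
      = ∑ j : Fin r, g (Fin.castLE hrn j) := by
  have hset : Finset.univ.filter (fun i : Fin n => (i : ℕ) < r)
      = Finset.univ.map (Fin.castLEEmb hrn) := by
    ext x
    simp only [Finset.mem_filter, Finset.mem_univ, true_and, Finset.mem_map]
    constructor
    · intro hx
      exact ⟨⟨(x : ℕ), hx⟩, by ext; simp⟩
    · rintro ⟨j, rfl⟩
      simpa using j.2
  rw [hset, Finset.sum_map]
  rfl

lemma herm_symm {m : ℕ} {A : Matrix (Fin m) (Fin m) ℝ} (h : A.IsHermitian) : A.IsSymm := by
  rw [Matrix.IsSymm, ← conjTranspose_eq_transpose_of_trivial, h]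

lemma trace_vecMulVec {m : ℕ} (v w : Fin m → ℝ) : (vecMulVec v w).trace = v ⬝ᵥ w := by
  simp [Matrix.trace, Matrix.diag, vecMulVec_apply, dotProduct]

lemma complete_sum {n : ℕ} (u : Fin n → (Fin n → ℝ))
    (hu : ∀ i j : Fin n, u i ⬝ᵥ u j = if i = j then (1 : ℝ) else 0) :
    ∑ i : Fin n, vecMulVec (u i) (u i) = (1 : Matrix (Fin n) (Fin n) ℝ) := by
  set U : Matrix (Fin n) (Fin n) ℝ := of fun i j => u i j with hU
  have hUU : U * Uᵀ = 1 := by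
    ext i j
    rw [Matrix.mul_apply]
    have h := hu i j
    simp only [dotProduct] at h
    simpa [hU, Matrix.transpose_apply, Matrix.one_apply] using h
  have hUtU : Uᵀ * U = 1 := mul_eq_one_comm.mp hUU
  ext a b
  have h2 : (Uᵀ * U) a b = (1 : Matrix (Fin n) (Fin n) ℝ) a b := by rw [hUtU]
  rw [Matrix.mul_apply] at h2
  rw [Matrix.sum_apply]
  simpa [hU, vecMulVec_apply, Matrix.transpose_apply] using h2

-- first-order condition
lemma foc {n k : ℕ}
    (f : Matrix (Fin n) (Fin n) ℝ → ℝ)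
    (grad : Matrix (Fin n) (Fin n) ℝ → Matrix (Fin n) (Fin n) ℝ)
    (β : ℝ) (hβ : 0 < β)
    (hconv : ∀ X Y : Matrix (Fin n) (Fin n) ℝ, X.IsSymm → Y.IsSymm →
      f X + (grad X * (Y - X)).trace ≤ f Y)
    (hsmooth : ∀ X Y : Matrix (Fin n) (Fin n) ℝ, X.IsSymm → Y.IsSymm →
      frobNorm (grad X - grad Y) ≤ β * frobNorm (X - Y))
    (Xstar : Matrix (Fin n) (Fin n) ℝ)
    (hXstarMem : Xstar ∈ Fantope n k)
    (hXstarOpt : ∀ X ∈ Fantope n k, f Xstar ≤ f X) :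
    ∀ X ∈ Fantope n k, 0 ≤ (grad Xstar * (X - Xstar)).trace := by
  obtain ⟨hXsy, hXpsd, hXipsd, hXtr⟩ := hXstarMem
  intro X hX
  obtain ⟨hXsy2, hXpsd2, hXipsd2, hXtr2⟩ := hX
  set D := X - Xstar with hD
  have hDsym : D.IsSymm := hXsy2.sub hXsy
  have hDtr : D.trace = 0 := by rw [hD, Matrix.trace_sub, hXtr2, hXtr]; ring
  have hfd0 : 0 ≤ frobNorm D := frobNorm_nonneg D
  have key : ∀ t : ℝ, 0 < t → t ≤ 1 →
      0 ≤ (grad Xstar * D).trace + β * (t * frobNorm D ^ 2) := by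
    intro t ht0 ht1
    set Xt := Xstar + t • D with hXt
    have hXtsym : Xt.IsSymm := hXsy.add (hDsym.smul t)
    have hXtF : Xt ∈ Fantope n k := by
      refine ⟨hXtsym, ?_, ?_, ?_⟩
      · have hXtrep : Xt = (1 - t) • Xstar + t • X := by
          rw [hXt, hD]
          ext a b
          simp [Matrix.add_apply, Matrix.smul_apply, Matrix.sub_apply]
          ring
        rw [hXtrep]
        exact (psd_smul (by linarith) hXpsd).add (psd_smul ht0.le hXpsd2)
      · have hrep2 : (1 : Matrix (Fin n) (Fin n) ℝ) - Xt
            = (1 - t) • (1 - Xstar) + t • (1 - X) := by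
          rw [hXt, hD]
          ext a b
          simp [Matrix.add_apply, Matrix.smul_apply, Matrix.sub_apply]
          ring
        rw [hrep2]
        exact (psd_smul (by linarith) hXipsd).add (psd_smul ht0.le hXipsd2)
      · rw [hXt, Matrix.trace_add, Matrix.trace_smul, hDtr, hXtr]; simp
    have hfle : f Xstar ≤ f Xt := hXstarOpt Xt hXtF
    have hcv := hconv Xt Xstar hXtsym hXsy
    have hXsub : Xstar - Xt = (-t) • D := by
      rw [hXt]
      ext a b
      simp [Matrix.add_apply, Matrix.smul_apply, Matrix.sub_apply]
      try ring
    rw [hXsub] at hcv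
    have htr2 : (grad Xt * ((-t) • D)).trace = -t * (grad Xt * D).trace := by
      rw [Matrix.mul_smul, Matrix.trace_smul]; simp
    rw [htr2] at hcv
    have hgt : 0 ≤ (grad Xt * D).trace := by nlinarith
    have hsplit : (grad Xstar * D).trace
        = (grad Xt * D).trace + ((grad Xstar - grad Xt) * D).trace := by
      rw [Matrix.sub_mul, Matrix.trace_sub]; ring
    have hcs := trace_mul_abs_le (grad Xstar - grad Xt) D
    have hsm := hsmooth Xstar Xt hXsy hXtsym
    have hfn : frobNorm (Xstar - Xt) = t * frobNorm D := by
      rw [hXsub, neg_smul, frobNorm_neg, frobNorm_smul t ht0.le]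
    rw [hfn] at hsm
    have hg0 : 0 ≤ frobNorm (grad Xstar - grad Xt) := frobNorm_nonneg _
    have habs : |((grad Xstar - grad Xt) * D).trace| ≤ β * (t * frobNorm D ^ 2) := by
      nlinarith
    have := (abs_le.mp habs).1
    linarith
  by_contra hcon
  push_neg at hcon
  set T := (grad Xstar * D).trace with hT
  set s := β * frobNorm D ^ 2 with hs
  have hs0 : 0 ≤ s := mul_nonneg hβ.le (sq_nonneg _)
  set t := min 1 (-T / (s + 1)) with htdef
  have ht0 : 0 < t := lt_min one_pos (div_pos (by linarith) (by linarith))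
  have ht1 : t ≤ 1 := min_le_left _ _
  have hkey := key t ht0 ht1
  have hts : β * (t * frobNorm D ^ 2) = t * s := by rw [hs]; ring
  rw [hts] at hkey
  have hts2 : t * s ≤ (-T / (s + 1)) * s :=
    mul_le_mul_of_nonneg_right (min_le_right _ _) hs0
  have hfinal : (-T / (s + 1)) * s < -T := by
    rw [div_mul_eq_mul_div, div_lt_iff₀ (by linarith)]
    nlinarith
  linarith

theorem stmt12 {n k : ℕ} (hk : 0 < k) (hkn : k < n)
    (f : Matrix (Fin n) (Fin n) ℝ → ℝ)
    (grad : Matrix (Fin n) (Fin n) ℝ → Matrix (Fin n) (Fin n) ℝ)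
    (β : ℝ) (hβ : 0 < β)
    (hgradSymm : ∀ X : Matrix (Fin n) (Fin n) ℝ, (grad X).IsSymm)
    (hconv : ∀ X Y : Matrix (Fin n) (Fin n) ℝ, X.IsSymm → Y.IsSymm →
      f X + (grad X * (Y - X)).trace ≤ f Y)
    (hsmooth : ∀ X Y : Matrix (Fin n) (Fin n) ℝ, X.IsSymm → Y.IsSymm →
      frobNorm (grad X - grad Y) ≤ β * frobNorm (X - Y))
    (Xstar : Matrix (Fin n) (Fin n) ℝ)
    (hXstarMem : Xstar ∈ Fantope n k)
    (hXstarOpt : ∀ X ∈ Fantope n k, f Xstar ≤ f X)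
    (μ : Fin n → ℝ) (hμ : Antitone μ)
    (u : Fin n → (Fin n → ℝ))
    (hu : ∀ i j : Fin n, u i ⬝ᵥ u j = if i = j then (1 : ℝ) else 0)
    (hdecomp : -(grad Xstar) = ∑ i : Fin n, μ i • vecMulVec (u i) (u i))
    (r : ℕ) (hkr : k ≤ r) (hrn : r < n)
    (hgapr : 0 < μ ⟨k - 1, by omega⟩ - μ ⟨r, hrn⟩)
    (hrmin : ∀ j : ℕ, k ≤ j → ∀ hj : j < n,
      0 < μ ⟨k - 1, by omega⟩ - μ ⟨j, hj⟩ → r ≤ j) :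
    (∀ i : Fin n, r ≤ (i : ℕ) → u i ⬝ᵥ (Xstar *ᵥ u i) = 0) ∧
    Xstar.rank ≤ r ∧
    (r = k →
      Xstar = ∑ i ∈ Finset.univ.filter (fun i : Fin n => (i : ℕ) < k),
        vecMulVec (u i) (u i) ∧
      Xstar ∈ ProjSet n k) := by
  obtain ⟨hXsy, hXpsd, hXipsd, hXtr⟩ := hXstarMem
  have hcomp := complete_sum u hu
  -- trace formula
  have htrG : ∀ Y : Matrix (Fin n) (Fin n) ℝ,
      (-(grad Xstar) * Y).trace = ∑ i, μ i * (u i ⬝ᵥ (Y *ᵥ u i)) := by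
    intro Y
    rw [hdecomp, Finset.sum_mul, Matrix.trace_sum]
    refine Finset.sum_congr rfl fun i _ => ?_
    rw [Matrix.smul_mul, Matrix.trace_smul, trace_vecMulVec_mul]
    simp
  set c : Fin n → ℝ := fun i => u i ⬝ᵥ (Xstar *ᵥ u i) with hcdef
  have hc0 : ∀ i, 0 ≤ c i := fun i => by
    have := hXpsd.dotProduct_mulVec_nonneg (u i); rwa [star_trivial] at this
  have hc1 : ∀ i, c i ≤ 1 := by
    intro i
    have h := hXipsd.dotProduct_mulVec_nonneg (u i)
    rw [star_trivial, Matrix.sub_mulVec, Matrix.one_mulVec, dotProduct_sub, hu i i] at h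
    norm_num at h
    have : c i = u i ⬝ᵥ (Xstar *ᵥ u i) := rfl
    linarith
  have hcsum : ∑ i, c i = (k : ℝ) := by
    have h1 : ∑ i, c i = ((∑ i : Fin n, vecMulVec (u i) (u i)) * Xstar).trace := by
      rw [Finset.sum_mul, Matrix.trace_sum]
      exact Finset.sum_congr rfl fun i _ => (trace_vecMulVec_mul _ _ _).symm
    rw [h1, hcomp, Matrix.one_mul, hXtr]
  set A : Finset (Fin n) := Finset.univ.filter (fun i : Fin n => (i : ℕ) < k) with hA
  set Xk : Matrix (Fin n) (Fin n) ℝ := ∑ i ∈ A, vecMulVec (u i) (u i) with hXk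
  have hcardA : ∑ i ∈ A, (1 : ℝ) = (k : ℝ) := by
    rw [hA, sum_filter_lt hkn.le]; simp
  have hXkF : Xk ∈ Fantope n k := by
    refine ⟨herm_symm (psd_sum _ _ fun i _ => psd_vecMulVec _).1,
      psd_sum _ _ fun i _ => psd_vecMulVec _, ?_, ?_⟩
    · have hsplit := Finset.sum_filter_add_sum_filter_not Finset.univ
        (fun i : Fin n => (i : ℕ) < k) (fun i => vecMulVec (u i) (u i))
      have h1 : (1 : Matrix (Fin n) (Fin n) ℝ) - Xk
          = ∑ i ∈ Finset.univ.filter (fun i : Fin n => ¬ (i : ℕ) < k),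
              vecMulVec (u i) (u i) := by
        rw [hXk, hA, eq_comm, eq_sub_iff_add_eq, add_comm, ← hcomp]
        exact hsplit
      rw [h1]
      exact psd_sum _ _ fun i _ => psd_vecMulVec _
    · rw [hXk, Matrix.trace_sum]
      have : ∀ i ∈ A, (vecMulVec (u i) (u i)).trace = (1 : ℝ) := by
        intro i _
        rw [_root_.trace_vecMulVec, hu i i, if_pos rfl]
      rw [Finset.sum_congr rfl this, hcardA]
  -- key inequality
  have hfoc := foc f grad β hβ hconv hsmooth Xstar ⟨hXsy, hXpsd, hXipsd, hXtr⟩ hXstarOpt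
  have he : ∀ i : Fin n, u i ⬝ᵥ (Xk *ᵥ u i) = if (i : ℕ) < k then (1 : ℝ) else 0 := by
    intro i
    rw [hXk, sum_mulVec', dotProduct_sum']
    have hterm : ∀ j ∈ A, u i ⬝ᵥ (vecMulVec (u j) (u j) *ᵥ u i)
        = if j = i then (1 : ℝ) else 0 := by
      intro j _
      rw [vecMulVec_mulVec', dotProduct_smul, hu i j, hu j i]
      by_cases h : j = i
      · subst h; simp
      · simp [h, Ne.symm h]
    rw [Finset.sum_congr rfl hterm, Finset.sum_ite_eq' A i (fun _ => (1 : ℝ))]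
    rw [hA]
    simp
  have hineq : ∑ i ∈ A, μ i ≤ ∑ i, μ i * c i := by
    have h0 := hfoc Xk hXkF
    have h1 : (grad Xstar * (Xk - Xstar)).trace
        = -((-(grad Xstar) * Xk).trace) + (-(grad Xstar) * Xstar).trace := by
      rw [Matrix.mul_sub, Matrix.trace_sub, Matrix.neg_mul, Matrix.neg_mul,
        Matrix.trace_neg, Matrix.trace_neg]
      ring
    rw [h1, htrG, htrG] at h0
    have h2 : ∑ i, μ i * (u i ⬝ᵥ (Xk *ᵥ u i)) = ∑ i ∈ A, μ i := by
      have hti : ∀ i : Fin n, μ i * (u i ⬝ᵥ (Xk *ᵥ u i))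
          = if (i : ℕ) < k then μ i else 0 := by
        intro i
        rw [he i]
        by_cases h : (i : ℕ) < k <;> simp [h]
      rw [Finset.sum_congr rfl (fun i _ => hti i), ← Finset.sum_filter]
    rw [h2] at h0
    have h3 : ∑ i, μ i * (u i ⬝ᵥ (Xstar *ᵥ u i)) = ∑ i, μ i * c i := rfl
    rw [h3] at h0
    linarith
  -- the slack function
  set t0 : ℝ := μ ⟨k - 1, by omega⟩ with ht0def
  set φ : Fin n → ℝ := fun i =>
    if (i : ℕ) < k then (μ i - t0) * (1 - c i) else (t0 - μ i) * c i with hφdef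
  have hφ0 : ∀ i, 0 ≤ φ i := by
    intro i
    simp only [hφdef]
    by_cases h : (i : ℕ) < k
    · rw [if_pos h]
      have h1 : μ ⟨k - 1, by omega⟩ ≤ μ i := hμ (by
        rw [Fin.le_def]; simp; omega)
      have := hc1 i
      nlinarith
    · rw [if_neg h]
      have h1 : μ i ≤ μ ⟨k - 1, by omega⟩ := hμ (by
        rw [Fin.le_def]; simp; omega)
      have := hc0 i
      nlinarith
  have hιsum : ∑ i : Fin n, (if (i : ℕ) < k then (1 : ℝ) else 0) = (k : ℝ) := by
    rw [← Finset.sum_filter]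
    exact hcardA
  have hφsum : ∑ i, φ i = ∑ i ∈ A, μ i - ∑ i, μ i * c i := by
    have hterm : ∀ i : Fin n, φ i
        = ((if (i : ℕ) < k then μ i else 0) - μ i * c i)
          + t0 * (c i - (if (i : ℕ) < k then (1 : ℝ) else 0)) := by
      intro i
      simp only [hφdef]
      by_cases h : (i : ℕ) < k <;> simp [h] <;> ring
    rw [Finset.sum_congr rfl fun i _ => hterm i, Finset.sum_add_distrib]
    have hpart1 : ∑ i : Fin n, ((if (i : ℕ) < k then μ i else 0) - μ i * c i)
        = ∑ i ∈ A, μ i - ∑ i, μ i * c i := by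
      rw [Finset.sum_sub_distrib, ← Finset.sum_filter]
    have hpart2 : ∑ i : Fin n, t0 * (c i - (if (i : ℕ) < k then (1 : ℝ) else 0)) = 0 := by
      rw [← Finset.mul_sum, Finset.sum_sub_distrib, hcsum, hιsum]
      ring
    rw [hpart1, hpart2]
    ring
  have hφeq : ∀ i, φ i = 0 := by
    have hle : ∑ i, φ i ≤ 0 := by rw [hφsum]; linarith
    have heq : ∑ i : Fin n, φ i = 0 :=
      le_antisymm hle (Finset.sum_nonneg fun i _ => hφ0 i)
    intro i
    exact (Finset.sum_eq_zero_iff_of_nonneg fun i _ => hφ0 i).mp heq i (Finset.mem_univ i)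
  have hczero : ∀ i : Fin n, r ≤ (i : ℕ) → c i = 0 := by
    intro i hi
    have hik : ¬ (i : ℕ) < k := by omega
    have hφi := hφeq i
    simp only [hφdef] at hφi
    simp only [if_neg hik] at hφi
    have hle : μ i ≤ μ ⟨r, hrn⟩ := hμ (by rw [Fin.le_def]; exact hi)
    have hpos : 0 < t0 - μ i := by rw [ht0def]; linarith
    rcases mul_eq_zero.mp hφi with h | h
    · linarith
    · exact h
  have hvanish : ∀ i : Fin n, r ≤ (i : ℕ) → Xstar *ᵥ u i = 0 := by
    intro i hi
    have h := hXpsd.dotProduct_mulVec_zero_iff (u i)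
    rw [star_trivial] at h
    exact h.mp (hczero i hi)
  have hXdecom : Xstar = ∑ i : Fin n, vecMulVec (Xstar *ᵥ u i) (u i) := by
    conv_lhs => rw [← Matrix.mul_one Xstar, ← hcomp]
    rw [Finset.mul_sum]
    exact Finset.sum_congr rfl fun i _ => _root_.mul_vecMulVec _ _ _
  refine ⟨fun i hi => hczero i hi, ?_, ?_⟩
  · -- rank
    set V : Matrix (Fin n) (Fin r) ℝ :=
      of fun a j => (Xstar *ᵥ u (Fin.castLE hrn.le j)) a with hV
    set W : Matrix (Fin r) (Fin n) ℝ :=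
      of fun j b => u (Fin.castLE hrn.le j) b with hW
    have hVW : Xstar = V * W := by
      ext a b
      have h1 : Xstar a b = ∑ i : Fin n, (Xstar *ᵥ u i) a * u i b := by
        conv_lhs => rw [hXdecom]
        rw [Matrix.sum_apply]
        rfl
      rw [h1, Matrix.mul_apply]
      rw [← Finset.sum_subset
        (Finset.filter_subset (fun i : Fin n => (i : ℕ) < r) Finset.univ)
        (fun i _ hi => by
          have : r ≤ (i : ℕ) := by
            simp only [Finset.mem_filter, Finset.mem_univ, true_and] at hi
            omega
          rw [hvanish i this]
          simp)]
      rw [sum_filter_lt hrn.le (fun i => (Xstar *ᵥ u i) a * u i b)]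
      rfl
    calc Xstar.rank = (V * W).rank := by rw [← hVW]
      _ ≤ W.rank := Matrix.rank_mul_le_right V W
      _ ≤ r := Matrix.rank_le_height W
  · -- r = k case
    intro hrk
    have hcone : ∀ i : Fin n, (i : ℕ) < k → c i = 1 := by
      have hsplit := Finset.sum_filter_add_sum_filter_not Finset.univ
        (fun i : Fin n => (i : ℕ) < k) c
      have hAc : ∑ i ∈ Finset.univ.filter (fun i : Fin n => ¬ (i : ℕ) < k), c i = 0 :=
        Finset.sum_eq_zero fun i hi => hczero i (by
          simp only [Finset.mem_filter, Finset.mem_univ, true_and] at hi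
          omega)
      have hAsum : ∑ i ∈ A, c i = (k : ℝ) := by
        rw [hA]
        have := hsplit
        rw [hAc, add_zero, hcsum] at this
        exact this
      have hzero : ∑ i ∈ A, (1 - c i) = 0 := by
        rw [Finset.sum_sub_distrib, hcardA, hAsum]; ring
      intro i hik
      have hmem : i ∈ A := by rw [hA]; simp [hik]
      have := (Finset.sum_eq_zero_iff_of_nonneg
        fun j _ => by linarith [hc1 j]).mp hzero i hmem
      linarith
    have hfix : ∀ i : Fin n, (i : ℕ) < k → Xstar *ᵥ u i = u i := by
      intro i hik
      have h0 : u i ⬝ᵥ ((1 - Xstar) *ᵥ u i) = 0 := by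
        rw [Matrix.sub_mulVec, Matrix.one_mulVec, dotProduct_sub, hu i i]
        have := hcone i hik
        rw [hcdef] at this
        simp only at this
        rw [this]
        norm_num
      have h := hXipsd.dotProduct_mulVec_zero_iff (u i)
      rw [star_trivial] at h
      have h2 := h.mp h0
      rw [Matrix.sub_mulVec, Matrix.one_mulVec, sub_eq_zero] at h2
      exact h2.symm
    have hXeq : Xstar = ∑ i ∈ A, vecMulVec (u i) (u i) := by
      rw [hXdecom]
      rw [← Finset.sum_subset (Finset.filter_subset (fun i : Fin n => (i : ℕ) < k)
        Finset.univ) (fun i _ hi => by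
          have hri : r ≤ (i : ℕ) := by
            simp only [Finset.mem_filter, Finset.mem_univ, true_and] at hi
            omega
          rw [hvanish i hri]
          ext a b
          simp [vecMulVec_apply])]
      exact Finset.sum_congr rfl fun i hi => by
        rw [hfix i (by simpa [hA] using hi)]
    refine ⟨hXeq, ?_⟩
    refine ⟨of fun a j => u (Fin.castLE hkn.le j) a, ?_, ?_⟩
    · ext j l
      rw [Matrix.mul_apply]
      have h := hu (Fin.castLE hkn.le j) (Fin.castLE hkn.le l)
      simp only [dotProduct] at h
      rw [Matrix.one_apply]
      have heq : (∑ a, (of fun a j => u (Fin.castLE hkn.le j) a)ᵀ j a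
          * (of fun a j => u (Fin.castLE hkn.le j) a) a l)
          = ∑ a, u (Fin.castLE hkn.le j) a * u (Fin.castLE hkn.le l) a := rfl
      rw [heq, h]
      by_cases hjl : j = l
      · subst hjl; simp
      · rw [if_neg (by simp [Fin.castLE_inj, hjl]), if_neg hjl]
    · ext a b
      rw [hXeq, Matrix.sum_apply, hA, sum_filter_lt hkn.le, Matrix.mul_apply]
      rfl
end

section
/- Let X ∈ F_{n,k} and assume λ_{n−k}(∇f(X)) − λ_{n−k+1}(∇f(X)) ≥ δ_X for some δ_X > 0. Then for any V ∈ argmin_{P∈P_{n,k}} ⟨P, ∇f(X)⟩, it holds that ⟨X − V, ∇f(X)⟩ ≥ (δ_X/2)·‖X − V‖_F². -/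
open Matrix

lemma psd_diag_nonneg {n : ℕ} {A : Matrix (Fin n) (Fin n) ℝ} (h : A.PosSemidef) (i : Fin n) :
    0 ≤ A i i := by
  exact h.diag_nonneg

lemma psd_trace_nonneg {n : ℕ} {A : Matrix (Fin n) (Fin n) ℝ} (h : A.PosSemidef) :
    0 ≤ A.trace :=
  Finset.sum_nonneg fun i _ => psd_diag_nonneg h i

open scoped MatrixOrder in
lemma psd_trace_mul_nonneg {n : ℕ} {A B : Matrix (Fin n) (Fin n) ℝ}
    (hA : A.PosSemidef) (hB : B.PosSemidef) : 0 ≤ (A * B).trace := by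
  obtain ⟨C, hC⟩ := CStarAlgebra.nonneg_iff_eq_star_mul_self.mp hA.nonneg
  have h2 : (C * B * Cᴴ).PosSemidef := hB.mul_mul_conjTranspose_same C
  have h3 : (C * B * Cᴴ).trace = (A * B).trace := by
    rw [trace_mul_cycle, hC, Matrix.star_eq_conjTranspose, Matrix.mul_assoc]
  linarith [psd_trace_nonneg h2]

lemma key_sum {n k : ℕ} (ev : Fin n → ℝ) (B : Finset (Fin n)) (hB : B.card = k)
    (a b : ℝ) (hlo : ∀ i ∈ B, ev i ≤ a) (hhi : ∀ i ∉ B, b ≤ ev i)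
    (y : Fin n → ℝ) (h0 : ∀ i, 0 ≤ y i) (h1 : ∀ i, y i ≤ 1)
    (hsum : ∑ i, y i = (k : ℝ)) :
    (b - a) * ∑ i ∈ Bᶜ, y i ≤ (∑ i, y i * ev i) - ∑ i ∈ B, ev i := by
  have h1' := Finset.sum_add_sum_compl B y
  have h2' := Finset.sum_add_sum_compl B (fun i => y i * ev i)
  have e1 : b * ∑ i ∈ Bᶜ, y i ≤ ∑ i ∈ Bᶜ, y i * ev i := by
    rw [Finset.mul_sum]
    refine Finset.sum_le_sum fun i hi => ?_
    have := hhi i (Finset.mem_compl.mp hi)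
    nlinarith [h0 i]
  have e2 : ∑ i ∈ B, a * (y i - 1) ≤ ∑ i ∈ B, ev i * (y i - 1) :=
    Finset.sum_le_sum fun i hi => mul_le_mul_of_nonpos_right (hlo i hi) (by linarith [h1 i])
  have e3 : ∑ i ∈ B, ev i * (y i - 1) = (∑ i ∈ B, y i * ev i) - ∑ i ∈ B, ev i := by
    rw [← Finset.sum_sub_distrib]
    exact Finset.sum_congr rfl fun i _ => by ring
  have e4 : ∑ i ∈ B, a * (y i - 1) = a * (∑ i ∈ B, y i) - a * k := by
    have : ∑ i ∈ B, a * (y i - 1) = (∑ i ∈ B, (a * y i)) - ∑ i ∈ B, a := by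
      rw [← Finset.sum_sub_distrib]
      exact Finset.sum_congr rfl fun i _ => by ring
    rw [this, Finset.sum_const, hB, ← Finset.mul_sum, nsmul_eq_mul]
    ring
  have hBc : ∑ i ∈ B, y i + ∑ i ∈ Bᶜ, y i = (k:ℝ) := by rw [h1', hsum]
  have e5 : a * (∑ i ∈ B, y i) - a * k = -(a * ∑ i ∈ Bᶜ, y i) := by
    have h6 : (∑ i ∈ B, y i) = (k:ℝ) - ∑ i ∈ Bᶜ, y i := by linarith
    rw [h6]; ring
  nlinarith [e1, e2, e3, e4, e5, h2']

lemma proj_diag_eq {n : ℕ} {W : Matrix (Fin n) (Fin n) ℝ} (hsym : Wᵀ = W) (hidem : W * W = W)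
    (h01 : ∀ i, W i i = 0 ∨ W i i = 1) : W = diagonal (fun i => W i i) := by
  have hsq : ∀ i, ∑ j, (W i j)^2 = W i i := by
    intro i
    conv_rhs => rw [← hidem]
    rw [mul_apply]
    refine Finset.sum_congr rfl fun j _ => ?_
    have h' : W i j = W j i := congrFun (congrFun hsym j) i
    rw [← h']; ring
  have key : ∀ i j, i ≠ j → W i j = 0 := by
    intro i j hij
    have hsplit : ∑ j' ∈ Finset.univ.erase i, (W i j')^2 + (W i i)^2 = ∑ j', (W i j')^2 :=
      Finset.sum_erase_add _ _ (Finset.mem_univ i)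
    have hz : ∑ j' ∈ Finset.univ.erase i, (W i j')^2 = 0 := by
      rcases h01 i with h | h <;> rw [hsq i] at hsplit <;> nlinarith [hsplit]
    have := (Finset.sum_eq_zero_iff_of_nonneg (fun j' _ => sq_nonneg (W i j'))).mp hz j
      (Finset.mem_erase.mpr ⟨hij.symm, Finset.mem_univ j⟩)
    exact pow_eq_zero_iff (by norm_num) |>.mp this
  ext i j
  by_cases h : i = j
  · subst h; simp
  · rw [diagonal_apply_ne _ h]; exact key i j h

set_option maxHeartbeats 2000000 in
theorem stmt16 {n k : ℕ} (hk : 0 < k) (hkn : k < n)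
    (f : Matrix (Fin n) (Fin n) ℝ → ℝ)
    (grad : Matrix (Fin n) (Fin n) ℝ → Matrix (Fin n) (Fin n) ℝ)
    (hgradSymm : ∀ X : Matrix (Fin n) (Fin n) ℝ, (grad X).IsSymm)
    (X : Matrix (Fin n) (Fin n) ℝ) (hX : X ∈ Fantope n k)
    (δX : ℝ) (hδX : 0 < δX)
    (hgapX : δX ≤ eigval (grad X) (n - k) - eigval (grad X) (n - k + 1))
    (V : Matrix (Fin n) (Fin n) ℝ) (hV : V ∈ ProjSet n k)
    (hVmin : ∀ P ∈ ProjSet n k, (V * grad X).trace ≤ (P * grad X).trace) :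
    δX / 2 * frobNorm (X - V) ^ 2 ≤ ((X - V) * grad X).trace := by
  obtain ⟨hXsymm, hXpsd, hX1psd, hXtr⟩ := hX
  obtain ⟨Q, hQ1, hQV⟩ := hV
  set G := grad X with hGdef
  have hG : G.IsHermitian := by
    rw [IsHermitian, conjTranspose_eq_transpose_of_trivial]; exact hgradSymm X
  set ev : Fin n → ℝ := hG.eigenvalues with hev
  set σ : Equiv.Perm (Fin n) := Tuple.sort ev with hσ
  have hmono : Monotone (ev ∘ σ) := Tuple.monotone_sort ev
  set U : Matrix (Fin n) (Fin n) ℝ := (hG.eigenvectorUnitary : Matrix (Fin n) (Fin n) ℝ) with hU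
  have hU1 : Uᵀ * U = 1 := by
    have := hG.eigenvectorUnitary.prop.1
    rwa [Matrix.star_eq_conjTranspose, conjTranspose_eq_transpose_of_trivial] at this
  have hU2 : U * Uᵀ = 1 := by
    have := hG.eigenvectorUnitary.prop.2
    rwa [Matrix.star_eq_conjTranspose, conjTranspose_eq_transpose_of_trivial] at this
  have hspec : G = U * diagonal ev * Uᵀ := by
    have := hG.spectral_theorem
    rwa [Unitary.conjStarAlgAut_apply, Matrix.star_eq_conjTranspose,
      conjTranspose_eq_transpose_of_trivial,
      show (RCLike.ofReal ∘ hG.eigenvalues : Fin n → ℝ) = ev from funext fun i => rfl] at this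
  -- sorted eigenvalue indices
  have hidx1 : eigval G (n - k) = (ev ∘ σ) ⟨k, hkn⟩ := by
    rw [eigval, dif_pos hG, dif_pos (show n - (n-k) < n by omega)]
    congr 1
    simp only [Fin.mk.injEq]
    omega
  have hidx2 : eigval G (n - k + 1) = (ev ∘ σ) ⟨k - 1, by omega⟩ := by
    rw [eigval, dif_pos hG, dif_pos (show n - (n-k+1) < n by omega)]
    congr 1
    simp only [Fin.mk.injEq]
    omega
  set a : ℝ := (ev ∘ σ) ⟨k - 1, by omega⟩ with ha
  set b : ℝ := (ev ∘ σ) ⟨k, hkn⟩ with hb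
  have hgap : δX ≤ b - a := by rw [← hidx1, ← hidx2]; exact hgapX
  -- the bottom-k index set
  set B : Finset (Fin n) := Finset.image (fun j : Fin k => σ (Fin.castLE hkn.le j)) Finset.univ
    with hB
  have hinj : Function.Injective (fun j : Fin k => σ (Fin.castLE hkn.le j)) :=
    fun p q hpq => Fin.castLE_injective hkn.le (σ.injective hpq)
  have hBcard : B.card = k := by
    rw [hB, Finset.card_image_of_injective _ hinj, Finset.card_univ, Fintype.card_fin]
  have hBmem : ∀ i, i ∈ B ↔ (σ.symm i : ℕ) < k := by
    intro i
    constructor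
    · intro hi
      rw [hB, Finset.mem_image] at hi
      obtain ⟨j, _, hj⟩ := hi
      rw [← hj, Equiv.symm_apply_apply]
      exact j.isLt
    · intro hi
      rw [hB, Finset.mem_image]
      refine ⟨⟨(σ.symm i : ℕ), hi⟩, Finset.mem_univ _, ?_⟩
      have e : Fin.castLE hkn.le ⟨(σ.symm i : ℕ), hi⟩ = σ.symm i := Fin.ext rfl
      rw [e, Equiv.apply_symm_apply]
  have hlo : ∀ i ∈ B, ev i ≤ a := by
    intro i hi
    have h1 : (σ.symm i : ℕ) < k := (hBmem i).mp hi
    have e : ev i = (ev ∘ σ) (σ.symm i) := by simp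
    rw [e, ha]
    exact hmono (by simp only [Fin.le_def]; omega)
  have hhi : ∀ i ∉ B, b ≤ ev i := by
    intro i hi
    have h1 : ¬ (σ.symm i : ℕ) < k := fun h => hi ((hBmem i).mpr h)
    have e : ev i = (ev ∘ σ) (σ.symm i) := by simp
    rw [e, hb]
    exact hmono (by simp only [Fin.le_def]; omega)
  -- trace via conjugation
  have trace_eq : ∀ M : Matrix (Fin n) (Fin n) ℝ, M.trace = ∑ i, M i i := fun M => rfl
  have htrD : ∀ (A : Matrix (Fin n) (Fin n) ℝ) (d : Fin n → ℝ),
      (A * diagonal d).trace = ∑ i, A i i * d i := by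
    intro A d
    simp [Matrix.trace, Matrix.diag, Matrix.mul_diagonal]
  have htrace : ∀ M : Matrix (Fin n) (Fin n) ℝ,
      (M * G).trace = ∑ i, (Uᵀ * M * U) i i * ev i := by
    intro M
    conv_lhs => rw [hspec]
    rw [← Matrix.mul_assoc, ← Matrix.mul_assoc, trace_mul_cycle (M * U) (diagonal ev) Uᵀ,
      ← Matrix.mul_assoc, htrD]
  set Y : Matrix (Fin n) (Fin n) ℝ := Uᵀ * X * U with hY
  set W : Matrix (Fin n) (Fin n) ℝ := Uᵀ * V * U with hW
  have hUH : Uᴴ = Uᵀ := conjTranspose_eq_transpose_of_trivial U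
  have hYpsd : Y.PosSemidef := by
    have := hXpsd.conjTranspose_mul_mul_same U
    rwa [hUH] at this
  have hY1psd : (1 - Y).PosSemidef := by
    have := hX1psd.conjTranspose_mul_mul_same U
    rw [hUH] at this
    have e : Uᵀ * (1 - X) * U = 1 - Y := by
      rw [Matrix.mul_sub, Matrix.sub_mul, Matrix.mul_one, hU1, hY]
    rwa [e] at this
  have hYtr : Y.trace = (k:ℝ) := by
    rw [hY, trace_mul_cycle, hU2, Matrix.one_mul, hXtr]
  have hy0 : ∀ i, 0 ≤ Y i i := psd_diag_nonneg hYpsd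
  have hy1 : ∀ i, Y i i ≤ 1 := by
    intro i
    have h := psd_diag_nonneg hY1psd i
    have e : (1 - Y) i i = 1 - Y i i := by simp [Matrix.sub_apply]
    rw [e] at h; linarith
  -- V is a projection
  have hVsymm : Vᵀ = V := by rw [hQV, transpose_mul, transpose_transpose]
  have hVidem : V * V = V := by
    rw [hQV, Matrix.mul_assoc, ← Matrix.mul_assoc Qᵀ Q Qᵀ, hQ1, Matrix.one_mul]
  have hVpsd : V.PosSemidef := by
    rw [hQV]
    have := posSemidef_self_mul_conjTranspose Q
    rwa [conjTranspose_eq_transpose_of_trivial] at this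
  have hV1idem : (1 - V) * (1 - V) = 1 - V := by
    have e : (1 - V) * (1 - V) = 1 - V - V + V * V := by noncomm_ring
    rw [e, hVidem]; abel
  have hV1psd : (1 - V).PosSemidef := by
    have := posSemidef_self_mul_conjTranspose (1 - V)
    rwa [conjTranspose_eq_transpose_of_trivial, transpose_sub, transpose_one, hVsymm,
      hV1idem] at this
  have hVtr : V.trace = (k:ℝ) := by
    rw [hQV, trace_mul_comm, hQ1, trace_one]
    simp
  -- W properties
  have hWsym : Wᵀ = W := by
    rw [hW, transpose_mul, transpose_mul, transpose_transpose, hVsymm, ← Matrix.mul_assoc]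
  have hWidem : W * W = W := by
    have e1 : (Uᵀ * V * U) * (Uᵀ * V * U) = Uᵀ * V * (U * Uᵀ) * V * U := by noncomm_ring
    have e2 : Uᵀ * V * V * U = Uᵀ * (V * V) * U := by noncomm_ring
    rw [hW, e1, hU2, Matrix.mul_one, e2, hVidem]
  have hWpsd : W.PosSemidef := by
    have := hVpsd.conjTranspose_mul_mul_same U
    rwa [hUH] at this
  have hW1psd : (1 - W).PosSemidef := by
    have := hV1psd.conjTranspose_mul_mul_same U
    rw [hUH] at this
    have e : Uᵀ * (1 - V) * U = 1 - W := by
      rw [Matrix.mul_sub, Matrix.sub_mul, Matrix.mul_one, hU1, hW]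
    rwa [e] at this
  have hWtr : W.trace = (k:ℝ) := by
    rw [hW, trace_mul_cycle, hU2, Matrix.one_mul, hVtr]
  have hw0 : ∀ i, 0 ≤ W i i := psd_diag_nonneg hWpsd
  have hw1 : ∀ i, W i i ≤ 1 := by
    intro i
    have h := psd_diag_nonneg hW1psd i
    have e : (1 - W) i i = 1 - W i i := by simp [Matrix.sub_apply]
    rw [e] at h; linarith
  -- the comparison projection P_B
  set E : Matrix (Fin n) (Fin k) ℝ := fun i j => if σ (Fin.castLE hkn.le j) = i then 1 else 0
    with hE
  have hEE : Eᵀ * E = 1 := by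
    ext j j'
    rw [Matrix.mul_apply]
    simp only [transpose_apply]
    simp only [Matrix.mul_apply, transpose_apply, hE, ite_mul, one_mul, zero_mul,
      Finset.sum_ite_eq, Finset.mem_univ, if_true]
    simp [Matrix.one_apply, Equiv.apply_eq_iff_eq, Fin.castLE_inj, eq_comm]
  have hPmem : (U * E) * (U * E)ᵀ ∈ ProjSet n k := by
    refine ⟨U * E, ?_, rfl⟩
    rw [transpose_mul]
    have e : Eᵀ * Uᵀ * (U * E) = Eᵀ * (Uᵀ * U) * E := by simp only [Matrix.mul_assoc]
    rw [e, hU1, Matrix.mul_one, hEE]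
  have hconjP : Uᵀ * ((U * E) * (U * E)ᵀ) * U = E * Eᵀ := by
    rw [transpose_mul]
    have e : Uᵀ * ((U * E) * (Eᵀ * Uᵀ)) * U = (Uᵀ * U) * (E * Eᵀ) * (Uᵀ * U) := by
      simp only [Matrix.mul_assoc]
    rw [e, hU1, Matrix.one_mul, Matrix.mul_one]
  have hEEt : ∀ i, (E * Eᵀ) i i = if i ∈ B then 1 else 0 := by
    intro i
    rw [Matrix.mul_apply]
    by_cases hi : i ∈ B
    · rw [if_pos hi]
      have h1 : (σ.symm i : ℕ) < k := (hBmem i).mp hi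
      rw [Finset.sum_eq_single (⟨(σ.symm i : ℕ), h1⟩ : Fin k)]
      · have e2 : Fin.castLE hkn.le ⟨(σ.symm i : ℕ), h1⟩ = σ.symm i := Fin.ext rfl
        have e : σ (Fin.castLE hkn.le ⟨(σ.symm i : ℕ), h1⟩) = i := by
          rw [e2, Equiv.apply_symm_apply]
        rw [transpose_apply]
        simp [hE, transpose_apply, e]
      · intro j _ hj
        have hcond : ¬ σ (Fin.castLE hkn.le j) = i := by
          intro hcon
          apply hj
          have e : Fin.castLE hkn.le j = σ.symm i := by rw [← hcon, Equiv.symm_apply_apply]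
          apply Fin.ext
          simpa using congrArg Fin.val e
        rw [transpose_apply]
        simp [hE, transpose_apply, hcond]
      · intro h; exact absurd (Finset.mem_univ _) h
    · rw [if_neg hi]
      apply Finset.sum_eq_zero
      intro j _
      have hcond : ¬ σ (Fin.castLE hkn.le j) = i := by
        intro hcon
        apply hi
        rw [hBmem, ← hcon, Equiv.symm_apply_apply]
        simpa using j.isLt
      rw [transpose_apply]
      simp [hE, transpose_apply, hcond]
  have hPtr : (((U * E) * (U * E)ᵀ) * G).trace = ∑ i ∈ B, ev i := by
    rw [htrace, hconjP]
    have e : ∀ i : Fin n, (E * Eᵀ) i i * ev i = if i ∈ B then ev i else 0 := by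
      intro i
      by_cases hi : i ∈ B <;> simp [hEEt i, hi]
    rw [Finset.sum_congr rfl fun i _ => e i]
    simp
  -- minimality forces W to be diagonal indicator of B
  have hmin : ∑ i, W i i * ev i ≤ ∑ i ∈ B, ev i := by
    have h := hVmin _ hPmem
    rw [hPtr, htrace V, ← hW] at h
    exact h
  have hwsum : ∑ i, W i i = (k:ℝ) := by rw [← trace_eq W]; exact hWtr
  have hks := key_sum ev B hBcard a b hlo hhi (fun i => W i i) hw0 hw1 hwsum
  have hs0w : 0 ≤ ∑ i ∈ Bᶜ, W i i := Finset.sum_nonneg fun i _ => hw0 i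
  have hscompl0 : ∑ i ∈ Bᶜ, W i i = 0 := by nlinarith [hks, hmin, hgap, hδX]
  have hWoff : ∀ i ∉ B, W i i = 0 := fun i hi =>
    (Finset.sum_eq_zero_iff_of_nonneg (fun j _ => hw0 j)).mp hscompl0 i (Finset.mem_compl.mpr hi)
  have hWB : ∀ i ∈ B, W i i = 1 := by
    have hsplit := Finset.sum_add_sum_compl B (fun i => W i i)
    have hsB : ∑ i ∈ B, W i i = (k:ℝ) := by
      rw [hscompl0] at hsplit
      rw [hwsum] at hsplit
      linarith
    have hcard : ∑ _i ∈ B, (1:ℝ) = (k:ℝ) := by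
      rw [Finset.sum_const, hBcard, nsmul_eq_mul, mul_one]
    intro i hi
    by_contra hne
    have hlt : W i i < 1 := lt_of_le_of_ne (hw1 i) hne
    have hlt2 : ∑ j ∈ B, W j j < ∑ _j ∈ B, (1:ℝ) :=
      Finset.sum_lt_sum (fun j _ => hw1 j) ⟨i, hi, hlt⟩
    rw [hsB, hcard] at hlt2
    exact lt_irrefl _ hlt2
  have h01 : ∀ i, W i i = 0 ∨ W i i = 1 := by
    intro i
    by_cases hi : i ∈ B
    · exact Or.inr (hWB i hi)
    · exact Or.inl (hWoff i hi)
  have hWdiag : W = diagonal (fun i => W i i) := proj_diag_eq hWsym hWidem h01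
  -- trace identities
  have hVG : (V * G).trace = ∑ i ∈ B, ev i := by
    rw [htrace V, ← hW]
    have e : ∀ i : Fin n, W i i * ev i = if i ∈ B then ev i else 0 := by
      intro i
      by_cases hi : i ∈ B
      · rw [hWB i hi, if_pos hi, one_mul]
      · rw [hWoff i hi, if_neg hi, zero_mul]
    rw [Finset.sum_congr rfl fun i _ => e i]
    simp
  have hXG : (X * G).trace = ∑ i, Y i i * ev i := by rw [htrace X, ← hY]
  have hXVG : ((X - V) * G).trace = (∑ i, Y i i * ev i) - ∑ i ∈ B, ev i := by
    rw [Matrix.sub_mul, trace_sub, hXG, hVG]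
  have hYW : (Y * W).trace = ∑ i ∈ B, Y i i := by
    conv_lhs => rw [hWdiag]
    rw [htrD]
    have e : ∀ i : Fin n, Y i i * W i i = if i ∈ B then Y i i else 0 := by
      intro i
      by_cases hi : i ∈ B
      · rw [hWB i hi, if_pos hi, mul_one]
      · rw [hWoff i hi, if_neg hi, mul_zero]
    rw [Finset.sum_congr rfl fun i _ => e i]
    simp
  -- Frobenius norm identities
  have hAsym : (X - V)ᵀ = X - V := by rw [transpose_sub, hXsymm.eq, hVsymm]
  have hfrob : frobNorm (X - V) ^ 2 = ((X - V) * (X - V)).trace := by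
    have hnn : (0:ℝ) ≤ ∑ i, ∑ j, ((X - V) i j)^2 :=
      Finset.sum_nonneg fun i _ => Finset.sum_nonneg fun j _ => sq_nonneg _
    rw [frobNorm, Real.sq_sqrt hnn]
    simp only [Matrix.trace, Matrix.diag, Matrix.mul_apply]
    refine Finset.sum_congr rfl fun i _ => Finset.sum_congr rfl fun j _ => ?_
    have e : (X - V) j i = (X - V) i j := congrFun (congrFun hAsym i) j
    rw [e]
    ring
  have hMM : ((X - V) * (X - V)).trace = ((Y - W) * (Y - W)).trace := by
    have e0 : Y - W = Uᵀ * (X - V) * U := by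
      rw [hY, hW, Matrix.mul_sub, Matrix.sub_mul]
    rw [e0]
    have e2 : (Uᵀ * (X - V) * U) * (Uᵀ * (X - V) * U)
        = Uᵀ * ((X - V) * (U * Uᵀ) * (X - V)) * U := by noncomm_ring
    rw [e2, hU2, Matrix.mul_one, trace_mul_cycle, ← Matrix.mul_assoc, hU2, Matrix.one_mul]
  have hexp : ((Y - W) * (Y - W)).trace
      = (Y * Y).trace - 2 * (Y * W).trace + (W * W).trace := by
    rw [Matrix.sub_mul, Matrix.mul_sub, Matrix.mul_sub, trace_sub, trace_sub, trace_sub,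
      trace_mul_comm W Y]
    ring
  have hYYle : (Y * Y).trace ≤ (k:ℝ) := by
    have h := psd_trace_mul_nonneg hYpsd hY1psd
    have e : (Y * (1 - Y)).trace = Y.trace - (Y * Y).trace := by
      rw [Matrix.mul_sub, Matrix.mul_one, trace_sub]
    rw [e, hYtr] at h
    linarith
  have hWWtr : (W * W).trace = (k:ℝ) := by rw [hWidem, hWtr]
  -- final arithmetic
  have hysum : ∑ i, Y i i = (k:ℝ) := by rw [← trace_eq Y]; exact hYtr
  have hky := key_sum ev B hBcard a b hlo hhi (fun i => Y i i) hy0 hy1 hysum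
  have hs0 : 0 ≤ ∑ i ∈ Bᶜ, Y i i := Finset.sum_nonneg fun i _ => hy0 i
  have hBsum : ∑ i ∈ B, Y i i + ∑ i ∈ Bᶜ, Y i i = (k:ℝ) := by
    rw [Finset.sum_add_sum_compl]; exact hysum
  rw [hXVG, hfrob, hMM, hexp, hYW, hWWtr]
  have p1 : 0 ≤ (b - a - δX) * ∑ i ∈ Bᶜ, Y i i := mul_nonneg (by linarith) hs0
  have p2 : 0 ≤ δX * ((k:ℝ) - (Y * Y).trace) := mul_nonneg hδX.le (by linarith)
  have p4 : δX * (∑ i ∈ B, Y i i) + δX * (∑ i ∈ Bᶜ, Y i i) = δX * (k:ℝ) := by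
    rw [← mul_add, hBsum]
  nlinarith [hky, p1, p2, p4]
end

section
/- Let Q and V₁ be n×k real matrices, each with orthonormal columns (QᵀQ = V₁ᵀV₁ = I_k). Then the smallest singular value of the k×k matrix V₁ᵀQ satisfies σ_min²(V₁ᵀQ) ≥ 1 − ½‖V₁V₁ᵀ − QQᵀ‖_F². -/
open Matrix

lemma trace_eq_sum_eig {m : ℕ} {A : Matrix (Fin m) (Fin m) ℝ} (hA : A.IsHermitian) :
    A.trace = ∑ i, hA.eigenvalues i := by
  simpa using hA.trace_eq_sum_eigenvalues

lemma eig_le_one {m : ℕ} {A : Matrix (Fin m) (Fin m) ℝ} (hA : A.IsHermitian)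
    (h1 : (1 - A).PosSemidef) (i : Fin m) : hA.eigenvalues i ≤ 1 := by
  set v := hA.eigenvectorBasis i with hvdef
  have h := h1.dotProduct_mulVec_nonneg (⇑v)
  have hnorm := hA.eigenvectorBasis.orthonormal.1 i
  rw [EuclideanSpace.norm_eq, Real.sqrt_eq_one] at hnorm
  have hv : dotProduct (star ⇑v) ⇑v = 1 := by
    simpa [dotProduct, pow_two] using hnorm
  rw [Matrix.sub_mulVec, Matrix.one_mulVec, dotProduct_sub, hv] at h
  rw [hA.eigenvalues_eq i]
  simp only [RCLike.re_to_real] at h ⊢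
  have hgoal : dotProduct (star ⇑v) (A *ᵥ ⇑v) ≤ 1 := by linarith
  exact hgoal

theorem stmt18 {n k : ℕ} (hk : 0 < k) (hkn : k ≤ n)
    (Q V1 : Matrix (Fin n) (Fin k) ℝ)
    (hQ : Qᵀ * Q = 1) (hV1 : V1ᵀ * V1 = 1) :
    1 - (1 / 2) * frobNorm (V1 * V1ᵀ - Q * Qᵀ) ^ 2 ≤
      eigval ((V1ᵀ * Q)ᵀ * (V1ᵀ * Q)) k := by
  set A : Matrix (Fin k) (Fin k) ℝ := (V1ᵀ * Q)ᵀ * (V1ᵀ * Q) with hAdef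
  have hct : ∀ {p q : ℕ} (M : Matrix (Fin p) (Fin q) ℝ), Mᴴ = Mᵀ := fun M => rfl
  have hpsd : A.PosSemidef := by
    have := Matrix.posSemidef_conjTranspose_mul_self (V1ᵀ * Q)
    rwa [hct] at this
  have hA : A.IsHermitian := hpsd.1
  have hAeq : A = Qᵀ * (V1 * V1ᵀ) * Q := by
    rw [hAdef, Matrix.transpose_mul, Matrix.transpose_transpose]
    simp only [Matrix.mul_assoc]
  -- 1 - A is PSD
  have hPP : (1 - V1 * V1ᵀ).PosSemidef := by
    have h2 : (1 - V1 * V1ᵀ)ᴴ * (1 - V1 * V1ᵀ) = 1 - V1 * V1ᵀ := by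
      rw [hct, Matrix.transpose_sub, Matrix.transpose_one, Matrix.transpose_mul,
        Matrix.transpose_transpose]
      rw [Matrix.sub_mul, Matrix.mul_sub, Matrix.mul_sub,
        show V1 * V1ᵀ * (V1 * V1ᵀ) = V1 * V1ᵀ by
          rw [Matrix.mul_assoc, ← Matrix.mul_assoc V1ᵀ V1 V1ᵀ, hV1, Matrix.one_mul]]
      simp
    have := Matrix.posSemidef_conjTranspose_mul_self (1 - V1 * V1ᵀ)
    rwa [h2] at this
  have h1A : (1 - A).PosSemidef := by
    have := hPP.mul_mul_conjTranspose_same Qᵀ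
    rw [hct] at this
    rwa [show Qᵀ * (1 - V1 * V1ᵀ) * Qᵀᵀ = 1 - A by
      rw [Matrix.transpose_transpose, hAeq, Matrix.mul_sub, Matrix.sub_mul, Matrix.mul_one, hQ]] at this
  -- eigenvalue facts
  have hle1 : ∀ i, hA.eigenvalues i ≤ 1 := eig_le_one hA h1A
  have htr : A.trace = ∑ i, hA.eigenvalues i := trace_eq_sum_eig hA
  -- frobenius norm
  have hfrob : frobNorm (V1 * V1ᵀ - Q * Qᵀ) ^ 2 = 2 * k - 2 * A.trace := by
    have hnn : (0:ℝ) ≤ ∑ i, ∑ j, ((V1 * V1ᵀ - Q * Qᵀ) i j) ^ 2 :=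
      Finset.sum_nonneg fun i _ => Finset.sum_nonneg fun j _ => sq_nonneg _
    rw [frobNorm, Real.sq_sqrt hnn]
    have hD : ∑ i, ∑ j, ((V1 * V1ᵀ - Q * Qᵀ) i j) ^ 2
        = ((V1 * V1ᵀ - Q * Qᵀ)ᵀ * (V1 * V1ᵀ - Q * Qᵀ)).trace := by
      rw [Matrix.trace]
      simp only [Matrix.diag, Matrix.mul_apply, Matrix.transpose_apply, pow_two]
      rw [Finset.sum_comm]
    have hexp : (V1 * V1ᵀ - Q * Qᵀ)ᵀ * (V1 * V1ᵀ - Q * Qᵀ)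
        = V1 * V1ᵀ - V1 * V1ᵀ * (Q * Qᵀ) - (Q * Qᵀ * (V1 * V1ᵀ) - Q * Qᵀ) := by
      rw [Matrix.transpose_sub, Matrix.transpose_mul, Matrix.transpose_mul,
        Matrix.transpose_transpose, Matrix.transpose_transpose,
        Matrix.sub_mul, Matrix.mul_sub, Matrix.mul_sub,
        show V1 * V1ᵀ * (V1 * V1ᵀ) = V1 * V1ᵀ by
          rw [Matrix.mul_assoc, ← Matrix.mul_assoc V1ᵀ V1 V1ᵀ, hV1, Matrix.one_mul],
        show Q * Qᵀ * (Q * Qᵀ) = Q * Qᵀ by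
          rw [Matrix.mul_assoc, ← Matrix.mul_assoc Qᵀ Q Qᵀ, hQ, Matrix.one_mul]]
    have t1 : (V1 * V1ᵀ).trace = (k:ℝ) := by
      rw [Matrix.trace_mul_comm, hV1, Matrix.trace_one]; simp
    have t2 : (Q * Qᵀ).trace = (k:ℝ) := by
      rw [Matrix.trace_mul_comm, hQ, Matrix.trace_one]; simp
    have t3 : (V1 * V1ᵀ * (Q * Qᵀ)).trace = A.trace := by
      rw [hAeq, Matrix.mul_assoc Qᵀ, Matrix.trace_mul_comm Qᵀ]; simp only [Matrix.mul_assoc]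
    have t4 : (Q * Qᵀ * (V1 * V1ᵀ)).trace = A.trace := by
      rw [Matrix.trace_mul_comm, t3]
    rw [hD, hexp, Matrix.trace_sub, Matrix.trace_sub, Matrix.trace_sub, t1, t2, t3, t4]
    ring
  -- unfold eigval
  have hj : k - k < k := by omega
  have heig : eigval A k = (hA.eigenvalues ∘ Tuple.sort hA.eigenvalues) ⟨k - k, hj⟩ := by
    rw [eigval, dif_pos hA, dif_pos hj]
  set g : Fin k → ℝ := hA.eigenvalues ∘ Tuple.sort hA.eigenvalues with hg
  have hidx : (⟨k - k, hj⟩ : Fin k) = ⟨0, hk⟩ := by ext; simp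
  set μ := g ⟨0, hk⟩ with hμ
  have hsum : ∑ i, g i = A.trace := by
    rw [htr, hg]
    exact Fintype.sum_equiv (Tuple.sort hA.eigenvalues) _ _ (fun i => rfl)
  have hg1 : ∀ i, g i ≤ 1 := fun i => hle1 _
  have hsplit : A.trace = μ + ∑ i ∈ Finset.univ.erase ⟨0, hk⟩, g i := by
    rw [← hsum, ← Finset.add_sum_erase Finset.univ g (Finset.mem_univ _)]
  have hbound : ∑ i ∈ Finset.univ.erase (⟨0, hk⟩ : Fin k), g i ≤ (k - 1 : ℝ) := by
    calc ∑ i ∈ Finset.univ.erase (⟨0, hk⟩ : Fin k), g i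
        ≤ ∑ i ∈ Finset.univ.erase (⟨0, hk⟩ : Fin k), 1 :=
          Finset.sum_le_sum fun i _ => hg1 i
      _ = ((Finset.univ.erase (⟨0, hk⟩ : Fin k)).card : ℝ) := by simp
      _ = (k - 1 : ℝ) := by
          rw [Finset.card_erase_of_mem (Finset.mem_univ _)]
          simp [Nat.cast_sub (by omega : 1 ≤ k)]
  rw [heig, hidx, hfrob]
  have : 1 - 1/2 * (2*(k:ℝ) - 2*A.trace) = A.trace - (k - 1) := by ring
  rw [this]
  have := hsplit
  linarith
end
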